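/- arXiv:2408.02607 — 2 statements merged into one kernel-verified Lean document; each statement's English description precedes it below -/
import Mathlib

section
/- Let n ≥ 1, K ⊆ {1,…,n}, and 1 ≤ i ≤ n. Then w_K(i) < 0 if and only if i + #K > n. -/
/-- The signed permutation `s_i` of `ℤ`, swapping `i ↔ i+1` and `-i ↔ -(i+1)`. -/
def sPerm (i : ℤ) : Equiv.Perm ℤ :=
  Equiv.swap i (i + 1) * Equiv.swap (-i) (-(i + 1))

/-- The permutation `t` of `ℤ`, swapping `n ↔ -n`. -/
def tPerm (n : ℕ) : Equiv.Perm ℤ :=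
  Equiv.swap (n : ℤ) (-(n : ℤ))

/-- `c_k = s_k s_{k+1} ⋯ s_{n-1} t`. -/
def cPerm (n k : ℕ) : Equiv.Perm ℤ :=
  (((List.range (n - k)).map (fun j => sPerm ((k : ℤ) + (j : ℤ)))).prod) * tPerm n

/-- `w_K`: product of the `c_k`, `k ∈ K`, in decreasing order of `k`. -/
def wPerm (n : ℕ) (K : Finset ℕ) : Equiv.Perm ℤ :=
  (((K.sort (· ≤ ·)).reverse).map (cPerm n)).prod

/-- Partial product `s_k s_{k+1} ⋯ s_{k+m-1}`. -/
def sProd (k m : ℕ) : Equiv.Perm ℤ :=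
  ((List.range m).map (fun j => sPerm ((k : ℤ) + (j : ℤ)))).prod

lemma cPerm_eq (n k : ℕ) : cPerm n k = sProd k (n - k) * tPerm n := rfl

lemma sProd_succ (k m : ℕ) :
    sProd k (m + 1) = sProd k m * sPerm ((k : ℤ) + (m : ℤ)) := by
  simp [sProd, List.range_succ]

lemma sPerm_fix {j x : ℤ} (h1 : x ≠ j) (h2 : x ≠ j + 1) (h3 : x ≠ -j) (h4 : x ≠ -(j + 1)) :
    sPerm j x = x := by
  simp only [sPerm, Equiv.Perm.mul_apply,
    Equiv.swap_apply_of_ne_of_ne h3 h4, Equiv.swap_apply_of_ne_of_ne h1 h2]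

lemma sPerm_apply_self {j : ℤ} (hj : 1 ≤ j) : sPerm j j = j + 1 := by
  have h3 : j ≠ -j := by omega
  have h4 : j ≠ -(j + 1) := by omega
  simp only [sPerm, Equiv.Perm.mul_apply, Equiv.swap_apply_of_ne_of_ne h3 h4,
    Equiv.swap_apply_left]

lemma sPerm_apply_succ {j : ℤ} (hj : 1 ≤ j) : sPerm j (j + 1) = j := by
  have h3 : j + 1 ≠ -j := by omega
  have h4 : j + 1 ≠ -(j + 1) := by omega
  simp only [sPerm, Equiv.Perm.mul_apply, Equiv.swap_apply_of_ne_of_ne h3 h4,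
    Equiv.swap_apply_right]

lemma sPerm_apply_neg_succ {j : ℤ} (hj : 1 ≤ j) : sPerm j (-(j + 1)) = -j := by
  have h1 : -j ≠ j := by omega
  have h2 : -j ≠ j + 1 := by omega
  simp only [sPerm, Equiv.Perm.mul_apply, Equiv.swap_apply_right,
    Equiv.swap_apply_of_ne_of_ne h1 h2]

lemma sProd_fix_small {k m : ℕ} {x : ℤ} (h1 : -(k : ℤ) < x) (h2 : x < k) :
    sProd k m x = x := by
  induction m with
  | zero => simp [sProd]
  | succ m ih =>
    rw [sProd_succ, Equiv.Perm.mul_apply, sPerm_fix (by omega) (by omega) (by omega) (by omega),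
      ih]

lemma sProd_fix_big {k m : ℕ} {x : ℤ} (h : (k : ℤ) + m < x) :
    sProd k m x = x := by
  induction m with
  | zero => simp [sProd]
  | succ m ih =>
    rw [sProd_succ, Equiv.Perm.mul_apply, sPerm_fix (by push_cast; omega) (by push_cast; omega)
      (by push_cast; omega) (by push_cast; omega), ih (by push_cast at h ⊢; omega)]

lemma sProd_apply_mid {k m : ℕ} {x : ℤ} (hk : 1 ≤ k) (h1 : (k : ℤ) ≤ x)
    (h2 : x < (k : ℤ) + m) : sProd k m x = x + 1 := by
  induction m with
  | zero => omega
  | succ m ih =>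
    rw [sProd_succ, Equiv.Perm.mul_apply]
    rcases lt_or_ge x ((k : ℤ) + m) with h | h
    · rw [sPerm_fix (by omega) (by push_cast; omega) (by omega) (by push_cast; omega), ih h]
    · have hx : x = (k : ℤ) + m := by push_cast at h2; omega
      subst hx
      rw [sPerm_apply_self (by omega), sProd_fix_big (by omega)]

lemma sProd_apply_neg_top {k : ℕ} (m : ℕ) (hk : 1 ≤ k) :
    sProd k m (-((k : ℤ) + m)) = -(k : ℤ) := by
  induction m with
  | zero => simp [sProd]
  | succ m ih =>
    rw [sProd_succ, Equiv.Perm.mul_apply]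
    have : (-((k : ℤ) + (m + 1 : ℕ))) = -(((k : ℤ) + m) + 1) := by push_cast; ring
    rw [this, sPerm_apply_neg_succ (by omega), ih]

lemma tPerm_fix {n : ℕ} {x : ℤ} (h1 : x ≠ n) (h2 : x ≠ -(n : ℤ)) : tPerm n x = x :=
  Equiv.swap_apply_of_ne_of_ne h1 h2

lemma cPerm_apply_mid {n k : ℕ} {x : ℤ} (hk : 1 ≤ k) (hkn : k ≤ n) (h1 : (k : ℤ) ≤ x)
    (h2 : x < n) : cPerm n k x = x + 1 := by
  rw [cPerm_eq, Equiv.Perm.mul_apply, tPerm_fix (by omega) (by omega),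
    sProd_apply_mid hk h1 (by push_cast; omega)]

lemma cPerm_apply_n {n k : ℕ} (hk : 1 ≤ k) (hkn : k ≤ n) : cPerm n k (n : ℤ) = -(k : ℤ) := by
  rw [cPerm_eq, Equiv.Perm.mul_apply, tPerm, Equiv.swap_apply_left]
  have : (-(n : ℤ)) = -((k : ℤ) + ((n - k : ℕ) : ℤ)) := by
    push_cast; omega
  rw [this, sProd_apply_neg_top _ hk]

lemma cPerm_fix_small {n k : ℕ} {x : ℤ} (hk : 1 ≤ k) (hkn : k ≤ n) (h1 : -(k : ℤ) < x)
    (h2 : x < k) : cPerm n k x = x := by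
  rw [cPerm_eq, Equiv.Perm.mul_apply, tPerm_fix (by omega) (by omega), sProd_fix_small h1 h2]

lemma prod_reverse_map_apply (f : ℕ → Equiv.Perm ℤ) (l : List ℕ) (x : ℤ) :
    ((l.reverse.map f).prod) x = l.foldl (fun y k => f k y) x := by
  induction l generalizing x with
  | nil => simp
  | cons a l ih =>
    simp only [List.reverse_cons, List.map_append, List.prod_append, List.map_cons,
      List.prod_cons, List.map_nil, List.prod_nil, mul_one, Equiv.Perm.mul_apply,
      List.foldl_cons]
    exact ih (f a x)

lemma foldl_neg_fix {n k : ℕ} (l : List ℕ) (hk : 1 ≤ k)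
    (h : ∀ k' ∈ l, k < k' ∧ k' ≤ n) :
    l.foldl (fun y k' => cPerm n k' y) (-(k : ℤ)) = -(k : ℤ) := by
  induction l with
  | nil => simp
  | cons a l ih =>
    obtain ⟨ha1, ha2⟩ := h a (List.mem_cons_self)
    rw [List.foldl_cons, cPerm_fix_small (by omega) ha2 (by omega) (by omega)]
    exact ih fun k' hk' => h k' (List.mem_cons_of_mem a hk')

lemma key (n : ℕ) (l : List ℕ) (hl : l.Pairwise (· < ·)) (hmem : ∀ k ∈ l, 1 ≤ k ∧ k ≤ n)
    (i : ℕ) (hi1 : 1 ≤ i) (hi2 : i ≤ n) :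
    (l.foldl (fun y k => cPerm n k y) (i : ℤ) < 0 ↔ n < i + l.length) := by
  induction l generalizing i with
  | nil => simp; omega
  | cons k l ih =>
    obtain ⟨hk1, hkn⟩ := hmem k (List.mem_cons_self)
    have hl' : l.Pairwise (· < ·) := hl.of_cons
    have hlt : ∀ k' ∈ l, k < k' := fun k' hk' => (List.pairwise_cons.mp hl).1 k' hk'
    have hmem' : ∀ k' ∈ l, 1 ≤ k' ∧ k' ≤ n := fun k' hk' => hmem k' (List.mem_cons_of_mem k hk')
    rcases lt_or_ge i k with hik | hik
    · -- c_k fixes i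
      rw [List.foldl_cons, cPerm_fix_small hk1 hkn (by push_cast; omega) (by push_cast; omega)]
      rw [ih hl' hmem' i hi1 hi2]
      -- need l.length ≤ n - k
      have hnd : l.Nodup := hl'.nodup
      have hsub : l.toFinset ⊆ Finset.Icc (k + 1) n := by
        intro x hx
        rw [List.mem_toFinset] at hx
        exact Finset.mem_Icc.mpr ⟨hlt x hx, (hmem' x hx).2⟩
      have hlen : l.length ≤ n - k := by
        have := Finset.card_le_card hsub
        rw [List.toFinset_card_of_nodup hnd, Nat.card_Icc] at this; omega
      simp only [List.length_cons]
      omega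
    · rcases lt_or_ge (i : ℤ) (n : ℤ) with hin | hin
      · -- c_k sends i to i+1
        rw [List.foldl_cons, cPerm_apply_mid hk1 hkn (by push_cast; omega) hin]
        have : ((i : ℤ) + 1) = ((i + 1 : ℕ) : ℤ) := by push_cast; ring
        rw [this, ih hl' hmem' (i + 1) (by omega) (by push_cast at hin; omega)]
        simp only [List.length_cons]
        omega
      · -- i = n, flips to -k
        have hieq : (i : ℤ) = (n : ℤ) := by omega
        rw [List.foldl_cons, hieq, cPerm_apply_n hk1 hkn,
          foldl_neg_fix l hk1 fun k' hk' => ⟨hlt k' hk', (hmem' k' hk').2⟩]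
        simp only [List.length_cons]
        constructor
        · intro _; omega
        · intro _; omega

theorem stmt1 (n : ℕ) (hn : 1 ≤ n) (K : Finset ℕ) (hK : K ⊆ Finset.Icc 1 n)
    (i : ℕ) (hi1 : 1 ≤ i) (hi2 : i ≤ n) :
    wPerm n K (i : ℤ) < 0 ↔ n < i + K.card := by
  rw [wPerm, prod_reverse_map_apply]
  have h := key n (K.sort (· ≤ ·)) (K.sortedLT_sort.pairwise) ?_ i hi1 hi2
  · rwa [Finset.length_sort] at h
  · intro k hk
    have := hK (Finset.mem_sort (α := ℕ) (· ≤ ·) |>.mp hk)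
    exact Finset.mem_Icc.mp this
end

section
/- Let n ≥ 1, K ⊆ {1,…,n}, and 1 ≤ j ≤ n. Then the number of indices i with 1 ≤ i ≤ n and 0 ≤ w_K(i) ≤ j equals j − #(K ∩ {1,…,j}). -/
lemma cPerm_def (n k : ℕ) : cPerm n k
    = (((List.range (n - k)).map (fun j : ℕ => sPerm ((k : ℤ) + (j:ℤ)))).prod) * tPerm n := by
  unfold cPerm
  congr 2
  rw [show (do let a ← List.range (n - k); pure ((a:ℤ))) =
      (List.range (n - k)).map (fun a : ℕ => (a:ℤ)) from
    List.flatMap_pure_eq_map _ _, List.map_map]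
  rfl

lemma cPerm_succ (n k : ℕ) (h : k < n) : cPerm n k = sPerm k * cPerm n (k+1) := by
  rw [cPerm_def, cPerm_def]
  rw [show n - k = (n - (k+1)) + 1 by omega, List.range_succ_eq_map]
  rw [List.map_cons, List.prod_cons, mul_assoc, List.map_map]
  congr 1
  congr 1
  congr 1
  apply List.map_congr_left
  intro a _
  simp only [Function.comp]
  congr 1
  push_cast; ring

lemma cPerm_last (n : ℕ) : cPerm n n = tPerm n := by
  rw [cPerm_def]; simp

lemma sPerm_apply (k x : ℤ) (hk : 1 ≤ k) :
    sPerm k x = if x = k then k+1 else if x = k+1 then k else if x = -k then -(k+1)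
      else if x = -(k+1) then -k else x := by
  simp only [sPerm, Equiv.Perm.mul_apply, Equiv.swap_apply_def]
  split_ifs <;> omega

lemma tPerm_apply (n : ℕ) (hn : 1 ≤ n) (x : ℤ) :
    tPerm n x = if x = (n:ℤ) then -(n:ℤ) else if x = -(n:ℤ) then n else x := by
  simp only [tPerm, Equiv.swap_apply_def]

/-- Explicit description of `cPerm`. -/
def cFun (n k x : ℤ) : ℤ :=
  if x = n then -k else if x = -n then k
  else if k ≤ x ∧ x < n then x + 1 else if -n < x ∧ x ≤ -k then x - 1 else x

lemma cPerm_apply (n : ℕ) (hn : 1 ≤ n) :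
    ∀ d k : ℕ, 1 ≤ k → k + d = n → ∀ x : ℤ, cPerm n k x = cFun n k x := by
  intro d
  induction d with
  | zero =>
    intro k hk hkn x
    obtain rfl : k = n := by omega
    rw [cPerm_last, tPerm_apply _ (by omega)]
    simp only [cFun]
    split_ifs <;> omega
  | succ d ih =>
    intro k hk hkn x
    rw [cPerm_succ n k (by omega), Equiv.Perm.mul_apply, ih (k+1) (by omega) (by omega),
      sPerm_apply _ _ (by exact_mod_cast hk)]
    simp only [cFun]
    push_cast
    split_ifs <;> omega

lemma cPerm_apply' (n k : ℕ) (hk : 1 ≤ k) (hkn : k ≤ n) (x : ℤ) :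
    cPerm n k x = cFun n k x :=
  cPerm_apply n (le_trans hk hkn) (n - k) k hk (by omega) x

open scoped List in
lemma sort_insert_max {a : ℕ} {s : Finset ℕ} (h1 : ∀ b ∈ s, b < a) :
    ((insert a s).sort (· ≤ ·)) = s.sort (· ≤ ·) ++ [a] := by
  have h2 : a ∉ s := fun h => absurd (h1 a h) (lt_irrefl a)
  haveI : IsAntisymm ℕ (· ≤ ·) := ⟨fun _ _ => le_antisymm⟩
  refine (fun hp h1' h2' => List.Perm.eq_of_pairwise' (r := (· ≤ ·)) (l₂ := s.sort (· ≤ ·) ++ [a]) h1' h2' hp) ?_ ?_ ?_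
  · calc (insert a s).sort (· ≤ ·) ~ (insert a s).toList := Finset.sort_perm_toList _ _
      _ ~ a :: s.toList := Finset.toList_insert h2
      _ ~ a :: s.sort (· ≤ ·) := ((Finset.sort_perm_toList s (· ≤ ·)).symm).cons a
      _ ~ s.sort (· ≤ ·) ++ [a] := (List.perm_append_singleton a _).symm
  · exact Finset.pairwise_sort ..
  · rw [List.pairwise_append]
    refine ⟨Finset.pairwise_sort .., List.pairwise_singleton _ _, ?_⟩
    intro x hx y hy
    rw [List.mem_singleton] at hy
    subst hy
    exact le_of_lt (h1 x ((Finset.mem_sort _).mp hx))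

lemma wPerm_insert (n : ℕ) {a : ℕ} {K : Finset ℕ} (h : ∀ b ∈ K, b < a) :
    wPerm n (insert a K) = cPerm n a * wPerm n K := by
  unfold wPerm
  rw [sort_insert_max h, List.reverse_append]
  simp

lemma castNeg_inj : Function.Injective (fun k : ℕ => -(k : ℤ)) := by
  intro x y h; simp only at h; omega

lemma card_mixed (n : ℕ) (t : Finset ℕ) (ht : t ⊆ Finset.Icc 1 n) :
    ((Finset.Icc (1:ℤ) n \ t.image (Nat.cast)) ∪ t.image (fun k : ℕ => -(k : ℤ))).card = n := by
  have hpos : ∀ x ∈ t, 1 ≤ x ∧ x ≤ n := by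
    intro x hx; simpa [Finset.mem_Icc] using ht hx
  have hsub : t.image (Nat.cast : ℕ → ℤ) ⊆ Finset.Icc (1:ℤ) n := by
    intro z hz
    rw [Finset.mem_image] at hz
    obtain ⟨x, hx, rfl⟩ := hz
    have := hpos x hx
    rw [Finset.mem_Icc]
    omega
  have hdisj : Disjoint (Finset.Icc (1:ℤ) n \ t.image (Nat.cast))
      (t.image (fun k : ℕ => -(k : ℤ))) := by
    rw [Finset.disjoint_left]
    intro z hz hz'
    rw [Finset.mem_sdiff, Finset.mem_Icc] at hz
    rw [Finset.mem_image] at hz'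
    obtain ⟨x, hx, rfl⟩ := hz'
    have := hpos x hx
    omega
  rw [Finset.card_union_of_disjoint hdisj, Finset.card_sdiff_of_subset hsub,
    Finset.card_image_of_injective _ Nat.cast_injective,
    Finset.card_image_of_injective _ castNeg_inj]
  have h1 : (Finset.Icc (1:ℤ) n).card = n := by
    rw [Int.card_Icc]; omega
  have h2 : t.card ≤ n := by
    have := Finset.card_le_card ht
    simpa using this
  omega

lemma image_wPerm (n : ℕ) (hn : 1 ≤ n) (K : Finset ℕ) :
    K ⊆ Finset.Icc 1 n →
    (Finset.Icc (1:ℤ) n).image (wPerm n K) =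
      (Finset.Icc (1:ℤ) n \ K.image (Nat.cast)) ∪ K.image (fun k : ℕ => -(k : ℤ)) := by
  induction K using Finset.induction_on_max with
  | empty =>
    intro _
    simp [wPerm]
  | insert a s hlt ih =>
    intro hsub
    have ha : 1 ≤ a ∧ a ≤ n := by
      have := hsub (Finset.mem_insert_self a s)
      simpa [Finset.mem_Icc] using this
    have hs : s ⊆ Finset.Icc 1 n := fun x hx => hsub (Finset.mem_insert_of_mem hx)
    have hspos : ∀ x ∈ s, 1 ≤ x ∧ x ≤ n := by
      intro x hx; simpa [Finset.mem_Icc] using hs hx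
    rw [wPerm_insert n hlt,
      show ⇑(cPerm n a * wPerm n s) = ⇑(cPerm n a) ∘ ⇑(wPerm n s) from rfl,
      ← Finset.image_image, ih hs]
    apply Finset.eq_of_subset_of_card_le
    · -- forward inclusion
      intro z hz
      rw [Finset.mem_image] at hz
      obtain ⟨y, hy, rfl⟩ := hz
      rw [cPerm_apply' n a ha.1 ha.2]
      rw [Finset.mem_union, Finset.mem_sdiff, Finset.mem_Icc, Finset.mem_image,
        Finset.mem_image] at hy
      rw [Finset.mem_union, Finset.mem_sdiff, Finset.mem_Icc, Finset.mem_image,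
        Finset.mem_image]
      rcases hy with ⟨⟨h1y, h2y⟩, hnot⟩ | ⟨x, hx, rfl⟩
      · -- y positive, y not in cast s
        by_cases hyn : y = (n : ℤ)
        · subst hyn
          right
          refine ⟨a, Finset.mem_insert_self a s, ?_⟩
          simp [cFun]
        · by_cases hya : (a : ℤ) ≤ y
          · -- a ≤ y < n : maps to y + 1
            have hcf : cFun n a y = y + 1 := by
              simp only [cFun]
              split_ifs <;> omega
            rw [hcf]
            left
            refine ⟨⟨by omega, by omega⟩, ?_⟩
            rintro ⟨x, hx, hxy⟩
            have hxlt : x < a := by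
              rcases Finset.mem_insert.mp hx with rfl | hxs
              · omega
              · exact hlt x hxs
            omega
          · -- 1 ≤ y < a : fixed
            have hcf : cFun n a y = y := by
              simp only [cFun]
              split_ifs <;> omega
            rw [hcf]
            left
            refine ⟨⟨by omega, by omega⟩, ?_⟩
            rintro ⟨x, hx, hxy⟩
            rcases Finset.mem_insert.mp hx with rfl | hxs
            · omega
            · exact hnot ⟨x, hxs, hxy⟩
      · -- y = -x, x ∈ s : fixed
        have hx' := hspos x hx
        have hxa := hlt x hx
        have hcf : cFun n a (-(x:ℤ)) = -(x:ℤ) := by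
          simp only [cFun]
          split_ifs <;> omega
        rw [hcf]
        right
        exact ⟨x, Finset.mem_insert_of_mem hx, rfl⟩
    · -- cards
      rw [Finset.card_image_of_injective _ (cPerm n a).injective,
        card_mixed n s hs, card_mixed n (insert a s) hsub]

lemma icc_cast (n : ℕ) : (Finset.Icc (1:ℤ) (n:ℤ)) = (Finset.Icc 1 n).image (Nat.cast : ℕ → ℤ) := by
  ext z
  simp only [Finset.mem_Icc, Finset.mem_image]
  constructor
  · intro hz
    exact ⟨z.toNat, by omega, by omega⟩
  · rintro ⟨x, hx, rfl⟩
    omega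

theorem stmt3 (n : ℕ) (hn : 1 ≤ n) (K : Finset ℕ) (hK : K ⊆ Finset.Icc 1 n)
    (j : ℕ) (hj1 : 1 ≤ j) (hj2 : j ≤ n) :
    (((Finset.Icc 1 n).filter
        (fun i : ℕ => 0 ≤ wPerm n K (i : ℤ) ∧ wPerm n K (i : ℤ) ≤ (j : ℤ))).card : ℤ)
      = (j : ℤ) - ((K ∩ Finset.Icc 1 j).card : ℤ) := by
  have hKpos : ∀ x ∈ K, 1 ≤ x ∧ x ≤ n := by
    intro x hx; simpa [Finset.mem_Icc] using hK hx
  have hfinj : Function.Injective (fun i : ℕ => wPerm n K (i : ℤ)) :=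
    (wPerm n K).injective.comp Nat.cast_injective
  have himg : (Finset.Icc 1 n).image (fun i : ℕ => wPerm n K (i : ℤ))
      = (Finset.Icc (1:ℤ) n \ K.image (Nat.cast)) ∪ K.image (fun k : ℕ => -(k : ℤ)) := by
    rw [show (fun i : ℕ => wPerm n K (i : ℤ)) = ⇑(wPerm n K) ∘ (Nat.cast : ℕ → ℤ) from rfl,
      ← Finset.image_image, ← icc_cast, image_wPerm n hn K hK]
  have hfilt : ((Finset.Icc 1 n).image (fun i : ℕ => wPerm n K (i : ℤ))).filter
        (fun z : ℤ => 0 ≤ z ∧ z ≤ (j:ℤ))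
      = ((Finset.Icc 1 j) \ K).image (Nat.cast : ℕ → ℤ) := by
    rw [himg]
    ext z
    simp only [Finset.mem_filter, Finset.mem_union, Finset.mem_sdiff, Finset.mem_Icc,
      Finset.mem_image]
    constructor
    · rintro ⟨⟨⟨h1, h2⟩, hnot⟩ | ⟨x, hx, rfl⟩, h0, hj⟩
      · refine ⟨z.toNat, ⟨⟨by omega, by omega⟩, ?_⟩, by omega⟩
        intro hzK
        exact hnot ⟨z.toNat, hzK, by omega⟩
      · have := hKpos x hx
        omega
    · rintro ⟨x, ⟨⟨hx1, hx2⟩, hxK⟩, rfl⟩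
      refine ⟨Or.inl ⟨⟨by omega, by omega⟩, ?_⟩, by omega, by omega⟩
      rintro ⟨y, hy, hyx⟩
      have : y = x := by omega
      subst this
      exact hxK hy
  have hcount : ((Finset.Icc 1 n).filter
        (fun i : ℕ => 0 ≤ wPerm n K (i : ℤ) ∧ wPerm n K (i : ℤ) ≤ (j : ℤ))).card
      = ((Finset.Icc 1 j) \ K).card := by
    calc ((Finset.Icc 1 n).filter
          (fun i : ℕ => 0 ≤ wPerm n K (i : ℤ) ∧ wPerm n K (i : ℤ) ≤ (j : ℤ))).card
        = (((Finset.Icc 1 n).filter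
            (fun i : ℕ => 0 ≤ wPerm n K (i : ℤ) ∧ wPerm n K (i : ℤ) ≤ (j : ℤ))).image
            (fun i : ℕ => wPerm n K (i : ℤ))).card :=
          (Finset.card_image_of_injective _ hfinj).symm
      _ = (((Finset.Icc 1 n).image (fun i : ℕ => wPerm n K (i : ℤ))).filter
            (fun z : ℤ => 0 ≤ z ∧ z ≤ (j:ℤ))).card := by rw [Finset.filter_image]
      _ = (((Finset.Icc 1 j) \ K).image (Nat.cast : ℕ → ℤ)).card := by rw [hfilt]
      _ = ((Finset.Icc 1 j) \ K).card := Finset.card_image_of_injective _ Nat.cast_injective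
  rw [hcount]
  have hsd : (Finset.Icc 1 j) \ K = (Finset.Icc 1 j) \ (K ∩ Finset.Icc 1 j) := by
    ext x
    simp only [Finset.mem_sdiff, Finset.mem_inter]
    tauto
  rw [hsd, Finset.card_sdiff_of_subset Finset.inter_subset_right]
  have hle : (K ∩ Finset.Icc 1 j).card ≤ j := by
    have := Finset.card_le_card (Finset.inter_subset_right (s₁ := K) (s₂ := Finset.Icc 1 j))
    simpa [Nat.card_Icc] using this
  have hcIcc : (Finset.Icc 1 j).card = j := by simp [Nat.card_Icc]
  rw [hcIcc]
  omega
end
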